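/- Let p be a prime, let n be a non-negative integer, let v ≥ 1, and let a₁ = 0, a₂, …, a_v ∈ ℤ_p^n. Let K' be the subgroup of ℤ_p^n generated by a₁, …, a_v. Then there exists a real polynomial R with deg(R) ≤ v − 1 such that for every integer d with 0 ≤ d ≤ n, the fraction of subgroups of ℤ_p^n of order p^d that contain K' equals R(p^d). -/

import Mathlib

open Module Submodule

section Grass
variable (p : ℕ) [Fact p.Prime]

/-- Number of `j`-dimensional subspaces of `𝔽_p^m`. -/
noncomputable def grass (m j : ℕ) : ℕ :=
  Nat.card {K : Submodule (ZMod p) (Fin m → ZMod p) // finrank (ZMod p) K = j}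

variable {V : Type} [AddCommGroup V] [Module (ZMod p) V] [Finite V]

lemma grass_eq {m : ℕ} (h : finrank (ZMod p) V = m) (j : ℕ) :
    Nat.card {K : Submodule (ZMod p) V // finrank (ZMod p) K = j} = grass p m j := by
  have : Module.Finite (ZMod p) V := Module.Finite.of_finite
  let e : V ≃ₗ[ZMod p] (Fin m → ZMod p) :=
    LinearEquiv.ofFinrankEq _ _ (by rw [h, Module.finrank_fin_fun])
  refine Nat.card_congr (Equiv.subtypeEquiv (Submodule.orderIsoMapComap e).toEquiv fun K => ?_)
  simp only [RelIso.coe_fn_toEquiv, Submodule.orderIsoMapComap_apply]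
  change _ ↔ finrank (ZMod p) (Submodule.map (e : V →ₗ[ZMod p] (Fin m → ZMod p)) K) = j
  rw [LinearEquiv.finrank_map_eq]

lemma finrank_comap_mkQ (W : Submodule (ZMod p) V) (K' : Submodule (ZMod p) (V ⧸ W)) :
    finrank (ZMod p) (Submodule.comap W.mkQ K') = finrank (ZMod p) K' + finrank (ZMod p) W := by
  have : Module.Finite (ZMod p) V := Module.Finite.of_finite
  set C := Submodule.comap W.mkQ K' with hC
  have hWC : W ≤ C := Submodule.le_comap_mkQ W K'
  let f : C →ₗ[ZMod p] V ⧸ W := W.mkQ.comp C.subtype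
  have h1 : LinearMap.range f = K' := by
    rw [LinearMap.range_comp, Submodule.range_subtype, hC,
      Submodule.map_comap_eq_of_surjective (Submodule.mkQ_surjective W)]
  have h2 : LinearMap.ker f = Submodule.comap C.subtype W := by
    rw [LinearMap.ker_comp, Submodule.ker_mkQ]
  have h3 := LinearMap.finrank_range_add_finrank_ker f
  rw [h1, h2] at h3
  rw [← h3, LinearEquiv.finrank_eq (Submodule.comapSubtypeEquivOfLe hWC)]

lemma contain_card (W : Submodule (ZMod p) V) {d : ℕ} (hd : finrank (ZMod p) W ≤ d) :
    Nat.card {K : Submodule (ZMod p) V // finrank (ZMod p) K = d ∧ W ≤ K}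
      = grass p (finrank (ZMod p) V - finrank (ZMod p) W) (d - finrank (ZMod p) W) := by
  have : Module.Finite (ZMod p) V := Module.Finite.of_finite
  have hfin : Finite (V ⧸ W) := Finite.of_surjective _ (Submodule.mkQ_surjective W)
  have hq : finrank (ZMod p) (V ⧸ W) = finrank (ZMod p) V - finrank (ZMod p) W := by
    have := Submodule.finrank_quotient_add_finrank W
    omega
  rw [← grass_eq p hq]
  refine Nat.card_congr (Equiv.symm ?_)
  refine Equiv.mk
    (fun K' => ⟨Submodule.comap W.mkQ K'.1, ?_, Submodule.le_comap_mkQ W _⟩)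
    (fun K => ⟨Submodule.map W.mkQ K.1, ?_⟩) ?_ ?_
  · have := finrank_comap_mkQ p W K'.1
    have h' := K'.2
    omega
  · obtain ⟨K, hK, hWK⟩ := K
    have hcm : Submodule.comap W.mkQ (Submodule.map W.mkQ K) = K := by
      rw [Submodule.comap_map_mkQ, sup_eq_right.mpr hWK]
    have := finrank_comap_mkQ p W (Submodule.map W.mkQ K)
    rw [hcm] at this
    simp only at this ⊢
    omega
  · rintro ⟨K', hK'⟩
    ext1
    simp only
    exact Submodule.map_comap_eq_of_surjective (Submodule.mkQ_surjective W) _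
  · rintro ⟨K, hK, hWK⟩
    ext1
    simp only
    rw [Submodule.comap_map_mkQ, sup_eq_right.mpr hWK]

lemma indep_in_card (K : Submodule (ZMod p) V) {k : ℕ} (hk : k ≤ finrank (ZMod p) K) :
    Nat.card {s : Fin k → V // LinearIndependent (ZMod p) s ∧ Set.range s ⊆ (K : Set V)}
      = ∏ i : Fin k, (p ^ finrank (ZMod p) K - p ^ i.val) := by
  haveI : NeZero p := ⟨(Fact.out : p.Prime).ne_zero⟩
  have e : {s : Fin k → V // LinearIndependent (ZMod p) s ∧ Set.range s ⊆ (K : Set V)}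
      ≃ {t : Fin k → K // LinearIndependent (ZMod p) t} := by
    refine Equiv.mk
      (fun s => ⟨fun i => ⟨s.1 i, s.2.2 (Set.mem_range_self i)⟩, ?_⟩)
      (fun t => ⟨fun i => (t.1 i : V), ?_, ?_⟩) (fun s => rfl) (fun t => rfl)
    · exact LinearIndependent.of_comp K.subtype s.2.1
    · exact t.2.map' K.subtype K.ker_subtype
    · rintro _ ⟨i, rfl⟩; exact (t.1 i).2
  rw [Nat.card_congr e, card_linearIndependent hk, ZMod.card]

lemma grass_pos {d : ℕ} (hd : d ≤ finrank (ZMod p) V) :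
    0 < Nat.card {K : Submodule (ZMod p) V // finrank (ZMod p) K = d} := by
  have : Module.Finite (ZMod p) V := Module.Finite.of_finite
  haveI : Finite (Submodule (ZMod p) V) := Finite.of_injective _ SetLike.coe_injective
  let b := Module.finBasis (ZMod p) V
  let c : Fin d → V := fun i => b (Fin.castLE hd i)
  have hc : LinearIndependent (ZMod p) c :=
    b.linearIndependent.comp _ (Fin.castLE_injective hd)
  have hK : finrank (ZMod p) (span (ZMod p) (Set.range c)) = d := by
    rw [finrank_span_eq_card hc, Fintype.card_fin]
  haveI : Nonempty {K : Submodule (ZMod p) V // finrank (ZMod p) K = d} :=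
    ⟨⟨span (ZMod p) (Set.range c), hK⟩⟩
  exact Nat.card_pos

lemma card_sigma_const {α : Type*} [Finite α] {β : α → Type*} [∀ a, Finite (β a)] {c : ℕ}
    (h : ∀ a, Nat.card (β a) = c) : Nat.card (Σ a, β a) = Nat.card α * c := by
  classical
  letI := Fintype.ofFinite α
  letI := fun a => Fintype.ofFinite (β a)
  simp_rw [Nat.card_eq_fintype_card] at h ⊢
  rw [Fintype.card_sigma]
  simp [h, Finset.sum_const, mul_comm]

lemma double_count {d k : ℕ} (hk : k ≤ d) (hd : d ≤ finrank (ZMod p) V) :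
    (Nat.card {K : Submodule (ZMod p) V // finrank (ZMod p) K = d})
        * ∏ i : Fin k, (p ^ d - p ^ i.val)
      = (∏ i : Fin k, (p ^ finrank (ZMod p) V - p ^ i.val))
        * grass p (finrank (ZMod p) V - k) (d - k) := by
  haveI : NeZero p := ⟨(Fact.out : p.Prime).ne_zero⟩
  have : Module.Finite (ZMod p) V := Module.Finite.of_finite
  haveI : Finite (Submodule (ZMod p) V) := Finite.of_injective _ SetLike.coe_injective
  let P := {x : Submodule (ZMod p) V × (Fin k → V) //
    finrank (ZMod p) x.1 = d ∧ LinearIndependent (ZMod p) x.2 ∧ Set.range x.2 ⊆ (x.1 : Set V)}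
  have e1 : P ≃ Σ K : {K : Submodule (ZMod p) V // finrank (ZMod p) K = d},
      {s : Fin k → V // LinearIndependent (ZMod p) s ∧ Set.range s ⊆ (K.1 : Set V)} :=
    { toFun := fun x => ⟨⟨x.1.1, x.2.1⟩, ⟨x.1.2, x.2.2.1, x.2.2.2⟩⟩
      invFun := fun y => ⟨(y.1.1, y.2.1), y.1.2, y.2.2.1, y.2.2.2⟩
      left_inv := fun x => rfl
      right_inv := fun y => rfl }
  have e2 : P ≃ Σ s : {s : Fin k → V // LinearIndependent (ZMod p) s},
      {K : Submodule (ZMod p) V // finrank (ZMod p) K = d ∧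
        span (ZMod p) (Set.range s.1) ≤ K} :=
    { toFun := fun x => ⟨⟨x.1.2, x.2.2.1⟩, ⟨x.1.1, x.2.1, span_le.mpr x.2.2.2⟩⟩
      invFun := fun y => ⟨(y.2.1, y.1.1), y.2.2.1, y.1.2, span_le.mp y.2.2.2⟩
      left_inv := fun x => rfl
      right_inv := fun y => rfl }
  have c1 : Nat.card P
      = (Nat.card {K : Submodule (ZMod p) V // finrank (ZMod p) K = d})
        * ∏ i : Fin k, (p ^ d - p ^ i.val) := by
    rw [Nat.card_congr e1]
    refine card_sigma_const fun K => ?_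
    rw [indep_in_card p K.1 (by rw [K.2]; exact hk), K.2]
  have c2 : Nat.card P
      = (∏ i : Fin k, (p ^ finrank (ZMod p) V - p ^ i.val))
        * grass p (finrank (ZMod p) V - k) (d - k) := by
    rw [Nat.card_congr e2]
    have hkV : k ≤ finrank (ZMod p) V := hk.trans hd
    have hidx : Nat.card {s : Fin k → V // LinearIndependent (ZMod p) s}
        = ∏ i : Fin k, (p ^ finrank (ZMod p) V - p ^ i.val) := by
      rw [card_linearIndependent hkV, ZMod.card]
    rw [← hidx]
    refine card_sigma_const fun s => ?_
    have hW : finrank (ZMod p) (span (ZMod p) (Set.range s.1)) = k := by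
      rw [finrank_span_eq_card s.2, Fintype.card_fin]
    rw [contain_card p _ (by rw [hW]; exact hk), hW]
  rw [← c1, c2]


theorem fraction_subgroups_containing_closure (p n v : ℕ) (hp : p.Prime) (hv : 0 < v)
    (a : Fin v → (Fin n → ZMod p)) (ha : a ⟨0, hv⟩ = 0) :
    ∃ R : Polynomial ℝ, R.natDegree ≤ v - 1 ∧
      ∀ d : ℕ, d ≤ n →
        (Nat.card {K : AddSubgroup (Fin n → ZMod p) //
            Nat.card K = p ^ d ∧ AddSubgroup.closure (Set.range a) ≤ K} : ℝ) /
          (Nat.card {K : AddSubgroup (Fin n → ZMod p) // Nat.card K = p ^ d} : ℝ) =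
        R.eval ((p : ℝ) ^ d) := by
  haveI : Fact p.Prime := ⟨hp⟩
  haveI : NeZero p := ⟨hp.ne_zero⟩
  have hfV : finrank (ZMod p) (Fin n → ZMod p) = n := Module.finrank_fin_fun _
  set W : Submodule (ZMod p) (Fin n → ZMod p) := span (ZMod p) (Set.range a) with hW
  set k := finrank (ZMod p) W with hk
  -- k ≤ v - 1
  have hkv : k ≤ v - 1 := by
    let c : Fin (v-1) → (Fin n → ZMod p) := fun i => a ⟨i.1+1, by omega⟩
    have hsub : Set.range a ⊆ (span (ZMod p) (Set.range c) : Set (Fin n → ZMod p)) := by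
      rintro _ ⟨j, rfl⟩
      rcases Nat.eq_zero_or_pos j.1 with h0 | hpos
      · have hj : j = ⟨0, hv⟩ := Fin.ext h0
        rw [hj, ha]; exact zero_mem _
      · have hj : a j = c ⟨j.1 - 1, by omega⟩ := by
          show a j = a ⟨(j.1 - 1) + 1, by omega⟩
          exact congrArg a (Fin.ext (by show j.1 = j.1 - 1 + 1; omega))
        rw [hj]; exact subset_span ⟨_, rfl⟩
    have h1 : W ≤ span (ZMod p) (Set.range c) := span_le.mpr hsub
    have h2 := Submodule.finrank_mono h1
    have h3 : finrank (ZMod p) (span (ZMod p) (Set.range c)) ≤ v - 1 := by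
      have h4 := finrank_range_le_card (R := ZMod p) c
      rw [Set.finrank] at h4
      simpa using h4
    omega
  have hkn : k ≤ n := by
    have := Submodule.finrank_le W
    omega
  refine ⟨∏ i ∈ Finset.range k,
    (Polynomial.C (((p:ℝ)^n - (p:ℝ)^i)⁻¹) * (Polynomial.X - Polynomial.C ((p:ℝ)^i))), ?_, ?_⟩
  · refine le_trans (Polynomial.natDegree_prod_le _ _) (le_trans
      (Finset.sum_le_sum (g := fun _ => 1) fun i _ => ?_) (by simpa using hkv))
    refine le_trans Polynomial.natDegree_mul_le ?_
    rw [Polynomial.natDegree_C, Polynomial.natDegree_X_sub_C]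
  intro d hd
  -- translate AddSubgroup counts to Submodule counts
  have hcard : ∀ S : Submodule (ZMod p) (Fin n → ZMod p),
      Nat.card S = p ^ finrank (ZMod p) S := fun S => by
    letI : Fintype S := Fintype.ofFinite _
    rw [Nat.card_eq_fintype_card, card_eq_pow_finrank (K := ZMod p), ZMod.card]
  have hcond : ∀ K : AddSubgroup (Fin n → ZMod p),
      (Nat.card K = p ^ d ↔ finrank (ZMod p) (AddSubgroup.toZModSubmodule p K) = d) := by
    intro K
    have h1 : Nat.card K = Nat.card (AddSubgroup.toZModSubmodule p K) := rfl
    rw [h1, hcard]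
    exact ⟨fun h => Nat.pow_right_injective hp.two_le h, fun h => by rw [h]⟩
  have hnum : Nat.card {K : AddSubgroup (Fin n → ZMod p) //
        Nat.card K = p ^ d ∧ AddSubgroup.closure (Set.range a) ≤ K}
      = Nat.card {S : Submodule (ZMod p) (Fin n → ZMod p) //
          finrank (ZMod p) S = d ∧ W ≤ S} := by
    refine Nat.card_congr (Equiv.subtypeEquiv (AddSubgroup.toZModSubmodule p).toEquiv fun K => ?_)
    rw [hcond K]
    constructor
    · rintro ⟨h1, h2⟩
      exact ⟨h1, span_le.mpr ((AddSubgroup.closure_le K).mp h2)⟩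
    · rintro ⟨h1, h2⟩
      exact ⟨h1, (AddSubgroup.closure_le K).mpr (span_le.mp h2)⟩
  have hden : Nat.card {K : AddSubgroup (Fin n → ZMod p) // Nat.card K = p ^ d}
      = Nat.card {S : Submodule (ZMod p) (Fin n → ZMod p) // finrank (ZMod p) S = d} := by
    exact Nat.card_congr (Equiv.subtypeEquiv (AddSubgroup.toZModSubmodule p).toEquiv
      fun K => hcond K)
  have hdpos : 0 < Nat.card {S : Submodule (ZMod p) (Fin n → ZMod p) //
      finrank (ZMod p) S = d} := grass_pos p (by omega)
  have hdenne : (Nat.card {S : Submodule (ZMod p) (Fin n → ZMod p) //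
      finrank (ZMod p) S = d} : ℝ) ≠ 0 := by positivity
  -- evaluate the polynomial
  have heval : Polynomial.eval ((p:ℝ)^d) (∏ i ∈ Finset.range k,
      (Polynomial.C (((p:ℝ)^n - (p:ℝ)^i)⁻¹) * (Polynomial.X - Polynomial.C ((p:ℝ)^i))))
      = ∏ i ∈ Finset.range k, (((p:ℝ)^n - (p:ℝ)^i)⁻¹ * ((p:ℝ)^d - (p:ℝ)^i)) := by
    rw [Polynomial.eval_prod]
    refine Finset.prod_congr rfl fun i _ => ?_
    simp
  rw [hnum, hden, heval]
  by_cases hdk : k ≤ d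
  · -- main case
    have hnumval : Nat.card {S : Submodule (ZMod p) (Fin n → ZMod p) //
        finrank (ZMod p) S = d ∧ W ≤ S} = grass p (n - k) (d - k) := by
      have := contain_card p W (d := d) (by omega)
      rwa [hfV, ← hk] at this
    have hident := double_count p (V := Fin n → ZMod p) (d := d) (k := k) hdk (by omega)
    rw [hfV] at hident
    -- cast the natural-number products to ℝ
    have hcastd : ((∏ i : Fin k, (p ^ d - p ^ i.val) : ℕ) : ℝ)
        = ∏ i ∈ Finset.range k, ((p:ℝ)^d - (p:ℝ)^i) := by
      rw [Nat.cast_prod, Fin.prod_univ_eq_prod_range (fun i => ((p ^ d - p ^ i : ℕ) : ℝ))]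
      refine Finset.prod_congr rfl fun i hi => ?_
      have : p ^ i ≤ p ^ d := Nat.pow_le_pow_right hp.pos (by
        have := Finset.mem_range.mp hi; omega)
      push_cast [Nat.cast_sub this]
      ring
    have hcastn : ((∏ i : Fin k, (p ^ n - p ^ i.val) : ℕ) : ℝ)
        = ∏ i ∈ Finset.range k, ((p:ℝ)^n - (p:ℝ)^i) := by
      rw [Nat.cast_prod, Fin.prod_univ_eq_prod_range (fun i => ((p ^ n - p ^ i : ℕ) : ℝ))]
      refine Finset.prod_congr rfl fun i hi => ?_
      have : p ^ i ≤ p ^ n := Nat.pow_le_pow_right hp.pos (by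
        have := Finset.mem_range.mp hi; omega)
      push_cast [Nat.cast_sub this]
      ring
    have hBne : (∏ i ∈ Finset.range k, ((p:ℝ)^n - (p:ℝ)^i)) ≠ 0 := by
      refine Finset.prod_ne_zero_iff.mpr fun i hi => ?_
      have hi' : i < n := by have := Finset.mem_range.mp hi; omega
      have : (p:ℝ)^i < (p:ℝ)^n := by
        apply pow_lt_pow_right₀ (by exact_mod_cast hp.one_lt) hi'
      exact sub_ne_zero.mpr (ne_of_lt this).symm
    have hidR : (Nat.card {S : Submodule (ZMod p) (Fin n → ZMod p) //
          finrank (ZMod p) S = d} : ℝ) * (∏ i ∈ Finset.range k, ((p:ℝ)^d - (p:ℝ)^i))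
        = (∏ i ∈ Finset.range k, ((p:ℝ)^n - (p:ℝ)^i)) * (grass p (n - k) (d - k) : ℝ) := by
      rw [← hcastd, ← hcastn]
      exact_mod_cast congrArg (Nat.cast : ℕ → ℝ) hident
    rw [hnumval]
    rw [Finset.prod_mul_distrib, Finset.prod_inv_distrib, inv_mul_eq_div]
    rw [div_eq_div_iff hdenne hBne]
    linarith [hidR]
  · -- degenerate case d < k : both sides vanish
    have hempty : IsEmpty {S : Submodule (ZMod p) (Fin n → ZMod p) //
        finrank (ZMod p) S = d ∧ W ≤ S} := by
      refine ⟨fun S => ?_⟩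
      obtain ⟨S, hS, hWS⟩ := S
      have := Submodule.finrank_mono hWS
      omega
    rw [Nat.card_of_isEmpty]
    rw [Nat.cast_zero, zero_div]
    symm
    refine Finset.prod_eq_zero (Finset.mem_range.mpr (by omega : d < k)) ?_
    simp
end Grass
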